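/- Id-entailment reduces to general entailment with a rigidity premise: for every set of formulas Φ and every formula ψ, Φ ⊨_id ψ if and only if Φ ∪ {∀x∀y?(x=y)} ⊨ ψ. -/

import Mathlib

namespace InqBQ

/-- A signature: predicate symbols and function symbols, each with an arity. -/
structure Sig where
  Pred : Type
  parity : Pred → ℕ
  Func : Type
  farity : Func → ℕ

/-- Terms over a signature, with variables indexed by `ℕ`. -/
inductive Term (σ : Sig) : Type where
  | var : ℕ → Term σ
  | func : (f : σ.Func) → (Fin (σ.farity f) → Term σ) → Term σ

/-- Formulas of InqBQ. -/
inductive Formula (σ : Sig) : Type where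
  | pred : (P : σ.Pred) → (Fin (σ.parity P) → Term σ) → Formula σ
  | eq : Term σ → Term σ → Formula σ
  | falsum : Formula σ
  | conj : Formula σ → Formula σ → Formula σ
  | idisj : Formula σ → Formula σ → Formula σ
  | impl : Formula σ → Formula σ → Formula σ
  | all : ℕ → Formula σ → Formula σ
  | iex : ℕ → Formula σ → Formula σ

variable {σ : Sig}

/-- ¬φ := φ → ⊥ -/
def Formula.neg (φ : Formula σ) : Formula σ := .impl φ .falsum

/-- ?φ := φ ⩒ ¬φ -/
def Formula.qm (φ : Formula σ) : Formula σ := .idisj φ φ.neg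

/-- ⊤ := ¬⊥ -/
def Formula.verum : Formula σ := Formula.neg .falsum

/-- Classical formulas: no inquisitive disjunction, no inquisitive existential. -/
def Formula.IsClassical : Formula σ → Prop
  | .pred _ _ => True
  | .eq _ _ => True
  | .falsum => True
  | .conj φ ψ => φ.IsClassical ∧ ψ.IsClassical
  | .idisj _ _ => False
  | .impl φ ψ => φ.IsClassical ∧ ψ.IsClassical
  | .all _ φ => φ.IsClassical
  | .iex _ _ => False

/-- The variable `n` occurs in a term. -/
def Term.VarOccurs : Term σ → ℕ → Prop
  | .var m, n => m = n
  | .func _ ts, n => ∃ i, (ts i).VarOccurs n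

/-- The variable `n` occurs free in a formula. -/
def Formula.FreeVar : Formula σ → ℕ → Prop
  | .pred _ ts, n => ∃ i, (ts i).VarOccurs n
  | .eq t t', n => t.VarOccurs n ∨ t'.VarOccurs n
  | .falsum, _ => False
  | .conj φ ψ, n => φ.FreeVar n ∨ ψ.FreeVar n
  | .idisj φ ψ, n => φ.FreeVar n ∨ ψ.FreeVar n
  | .impl φ ψ, n => φ.FreeVar n ∨ ψ.FreeVar n
  | .all x φ, n => n ≠ x ∧ φ.FreeVar n
  | .iex x φ, n => n ≠ x ∧ φ.FreeVar n

/-- A sentence is a formula with no free variables. -/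
def Formula.IsSentence (φ : Formula σ) : Prop := ∀ n, ¬ φ.FreeVar n

/-- A first-order information model `M = (W, D, I, ∼)`. -/
structure Model (σ : Sig) where
  W : Type
  D : Type
  wNonempty : Nonempty W
  dNonempty : Nonempty D
  predI : W → (P : σ.Pred) → (Fin (σ.parity P) → D) → Prop
  funcI : W → (f : σ.Func) → (Fin (σ.farity f) → D) → D
  eqI : W → D → D → Prop
  eqEquiv : ∀ w, Equivalence (eqI w)
  predCongr : ∀ w P (as bs : Fin (σ.parity P) → D),
      (∀ i, eqI w (as i) (bs i)) → (predI w P as ↔ predI w P bs)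
  funcCongr : ∀ w f (as bs : Fin (σ.farity f) → D),
      (∀ i, eqI w (as i) (bs i)) → eqI w (funcI w f as) (funcI w f bs)

/-- Denotation `[t]^g_w` of a term at a world under an assignment. -/
def Term.val (M : Model σ) (w : M.W) (g : ℕ → M.D) : Term σ → M.D
  | .var n => g n
  | .func f ts => M.funcI w f (fun i => (ts i).val M w g)

/-- The support relation `M, s ⊨_g φ`. -/
def Support (M : Model σ) : Set M.W → (ℕ → M.D) → Formula σ → Prop
  | s, g, .pred P ts => ∀ w ∈ s, M.predI w P (fun i => (ts i).val M w g)
  | s, g, .eq t t' => ∀ w ∈ s, M.eqI w (t.val M w g) (t'.val M w g)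
  | s, _, .falsum => s = ∅
  | s, g, .conj φ ψ => Support M s g φ ∧ Support M s g ψ
  | s, g, .idisj φ ψ => Support M s g φ ∨ Support M s g ψ
  | s, g, .impl φ ψ => ∀ t : Set M.W, t ⊆ s → Support M t g φ → Support M t g ψ
  | s, g, .all x φ => ∀ d : M.D, Support M s (Function.update g x d) φ
  | s, g, .iex x φ => ∃ d : M.D, Support M s (Function.update g x d) φ

/-- Id-models: `=` is interpreted as identity on the domain at each world. -/
def Model.IsId (M : Model σ) : Prop := ∀ w (d d' : M.D), M.eqI w d d' ↔ d = d'

/-- Entailment in InqBQ. -/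
def Entails (Φ : Set (Formula σ)) (ψ : Formula σ) : Prop :=
  ∀ (M : Model σ) (s : Set M.W) (g : ℕ → M.D),
    (∀ φ ∈ Φ, Support M s g φ) → Support M s g ψ

/-- Entailment restricted to id-models. -/
def EntailsId (Φ : Set (Formula σ)) (ψ : Formula σ) : Prop :=
  ∀ (M : Model σ), M.IsId → ∀ (s : Set M.W) (g : ℕ → M.D),
    (∀ φ ∈ Φ, Support M s g φ) → Support M s g ψ

/-- Validity in InqBQ. -/
def Valid (ψ : Formula σ) : Prop :=
  ∀ (M : Model σ) (s : Set M.W) (g : ℕ → M.D), Support M s g ψ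

/-- Validity over id-models. -/
def IdValid (ψ : Formula σ) : Prop :=
  ∀ (M : Model σ), M.IsId → ∀ (s : Set M.W) (g : ℕ → M.D), Support M s g ψ

/-- Equivalence of formulas. -/
def FmEquiv (φ ψ : Formula σ) : Prop :=
  ∀ (M : Model σ) (s : Set M.W) (g : ℕ → M.D), Support M s g φ ↔ Support M s g ψ

/-- A formula is truth-conditional if support at a state reduces to truth at each world. -/
def TruthConditional (φ : Formula σ) : Prop :=
  ∀ (M : Model σ) (s : Set M.W) (g : ℕ → M.D),
    Support M s g φ ↔ ∀ w ∈ s, Support M {w} g φ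

/-- A standard (Tarskian) relational structure for the signature. -/
structure Struc (σ : Sig) where
  D : Type
  dNonempty : Nonempty D
  predI : (P : σ.Pred) → (Fin (σ.parity P) → D) → Prop
  funcI : (f : σ.Func) → (Fin (σ.farity f) → D) → D

/-- Tarskian term denotation. -/
def Term.tval (A : Struc σ) (g : ℕ → A.D) : Term σ → A.D
  | .var n => g n
  | .func f ts => A.funcI f (fun i => (ts i).tval A g)

/-- Standard Tarskian satisfaction (reading `→` as material implication, `=` as identity). -/
def TSat (A : Struc σ) : (ℕ → A.D) → Formula σ → Prop
  | g, .pred P ts => A.predI P (fun i => (ts i).tval A g)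
  | g, .eq t t' => t.tval A g = t'.tval A g
  | _, .falsum => False
  | g, .conj φ ψ => TSat A g φ ∧ TSat A g ψ
  | g, .idisj φ ψ => TSat A g φ ∨ TSat A g ψ
  | g, .impl φ ψ => TSat A g φ → TSat A g ψ
  | g, .all x φ => ∀ d : A.D, TSat A (Function.update g x d) φ
  | g, .iex x φ => ∃ d : A.D, TSat A (Function.update g x d) φ

/-- Classical first-order (Tarskian) entailment. -/
def FOLEntails (Γ : Set (Formula σ)) (α : Formula σ) : Prop :=
  ∀ (A : Struc σ) (g : ℕ → A.D), (∀ γ ∈ Γ, TSat A g γ) → TSat A g α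

/-- The setoid on the domain given by `∼_w`. -/
def Model.setoidAt (M : Model σ) (w : M.W) : Setoid M.D := ⟨M.eqI w, M.eqEquiv w⟩

/-- The quotient relational structure `𝓜_w = (D/∼_w, I_w^∼)` induced at world `w`. -/
noncomputable def Model.quotStruc (M : Model σ) (w : M.W) : Struc σ where
  D := Quotient (M.setoidAt w)
  dNonempty := Nonempty.map (Quotient.mk (M.setoidAt w)) M.dNonempty
  predI P as := ∃ bs : Fin (σ.parity P) → M.D,
    (∀ i, Quotient.mk (M.setoidAt w) (bs i) = as i) ∧ M.predI w P bs
  funcI f as := Quotient.mk (M.setoidAt w) (M.funcI w f (fun i => (as i).out))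

/-- λt := ∃̷x (x = t). -/
def lam (x : ℕ) (t : Term σ) : Formula σ := .iex x (.eq (.var x) t)

/-- Conjunction of a finite list of formulas. -/
def conjList (l : List (Formula σ)) : Formula σ := l.foldr .conj Formula.verum

/-- x ≠ t. -/
def neTm (x : ℕ) (t : Term σ) : Formula σ := (Formula.eq (.var x) t).neg

/-- ∃̷x (x ≠ t). -/
def iexNe (t : Term σ) : Formula σ := .iex 0 (neTm 0 t)

/-- η := (=(a;b) ∧ =(b;a) ∧ ∃̷x(x≠b)) → ∃̷x(x≠a). -/
def etaOf (a b : Term σ) : Formula σ :=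
  .impl (.conj (.impl (lam 0 a) (lam 0 b))
          (.conj (.impl (lam 0 b) (lam 0 a)) (iexNe b)))
    (iexNe a)

/-- θ := ∃̷x ∃̷y ¬(x = a ∧ y = b). -/
def thetaOf (a b : Term σ) : Formula σ :=
  .iex 0 (.iex 1 (Formula.neg (.conj (.eq (.var 0) a) (.eq (.var 1) b))))

/-- ρ := ∀x∀y ?(x = y). -/
def rho : Formula σ := .all 0 (.all 1 (Formula.qm (.eq (.var 0) (.var 1))))

/-- The signature with exactly two constant symbols `a`, `b` (and no predicates). -/
def sigAB : Sig where
  Pred := Empty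
  parity := fun P => P.elim
  Func := Bool
  farity := fun _ => 0

/-- The constant `a`. -/
def tA : Term sigAB := .func false Fin.elim0

/-- The constant `b`. -/
def tB : Term sigAB := .func true Fin.elim0

def etaAB : Formula sigAB := etaOf tA tB

def thetaAB : Formula sigAB := thetaOf tA tB

/-- `a_w`. -/
def aVal (M : Model sigAB) (w : M.W) : M.D := M.funcI w false Fin.elim0

/-- `b_w`. -/
def bVal (M : Model sigAB) (w : M.W) : M.D := M.funcI w true Fin.elim0

/-- `R_s = {(a_w, b_w) | w ∈ s}`. -/
def RelOf (M : Model sigAB) (s : Set M.W) : Set (M.D × M.D) :=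
  {p | ∃ w ∈ s, p = (aVal M w, bVal M w)}

/-- An id-model (for the signature with the two constants a, b) is full if `R_W = D × D`. -/
def Model.IsFull (M : Model sigAB) : Prop := RelOf M Set.univ = Set.univ

/-- Classical existential quantifier ∃xφ := ¬∀x¬φ. -/
def cExists (x : ℕ) (φ : Formula σ) : Formula σ := (Formula.all x φ.neg).neg

/-- ⋀_{i<j<n} (xᵢ ≠ xⱼ). -/
def distinctFm (n : ℕ) : Formula sigAB :=
  conjList ((List.range n).flatMap fun i => (List.range n).filterMap fun j =>
    if i < j then some ((Formula.eq (.var i) (.var j)).neg) else none)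

/-- χₙ := ∃x₁…∃xₙ ⋀_{i<j} (xᵢ ≠ xⱼ), expressing that there are at least n elements. -/
def chi (n : ℕ) : Formula sigAB := (List.range n).foldr cExists (distinctFm n)

/-- The canonical full id-model over a nonempty domain `D`: worlds are pairs `(d, e)`,
with `a_{(d,e)} = d` and `b_{(d,e)} = e`. -/
def canonModel (D : Type) (hD : Nonempty D) : Model sigAB where
  W := D × D
  D := D
  wNonempty := Nonempty.map (fun d => (d, d)) hD
  dNonempty := hD
  predI := fun _ P => P.elim
  funcI := fun w f _ => cond f w.2 w.1
  eqI := fun _ => Eq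
  eqEquiv := fun _ => eq_equivalence
  predCongr := fun _ P => P.elim
  funcCongr := fun _ _ _ _ _ => rfl

/-- Extending a signature with two fresh constant symbols `a`, `b`. -/
def sigExt (σ : Sig) : Sig where
  Pred := σ.Pred
  parity := σ.parity
  Func := σ.Func ⊕ Bool
  farity := Sum.elim σ.farity (fun _ => 0)

/-- Lift of a term to the extended signature. -/
def Term.lift : Term σ → Term (sigExt σ)
  | .var n => .var n
  | .func f ts => .func (Sum.inl f) (fun i => (ts i).lift)

/-- Lift of a formula to the extended signature. -/
def Formula.lift : Formula σ → Formula (sigExt σ)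
  | .pred P ts => .pred P (fun i => (ts i).lift)
  | .eq t t' => .eq t.lift t'.lift
  | .falsum => .falsum
  | .conj φ ψ => .conj φ.lift ψ.lift
  | .idisj φ ψ => .idisj φ.lift ψ.lift
  | .impl φ ψ => .impl φ.lift ψ.lift
  | .all x φ => .all x φ.lift
  | .iex x φ => .iex x φ.lift

/-- The fresh constant `a` of the extended signature. -/
def extA : Term (sigExt σ) := .func (Sum.inr false) Fin.elim0

/-- The fresh constant `b` of the extended signature. -/
def extB : Term (sigExt σ) := .func (Sum.inr true) Fin.elim0

/-- The canonical full id-model based on a relational structure `𝓜`: worlds are pairs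
`(d, e)`; `a_{(d,e)} = d`, `b_{(d,e)} = e`, and all symbols of `σ` are interpreted
rigidly as in `𝓜`. -/
def canonModelOf (A : Struc σ) : Model (sigExt σ) where
  W := A.D × A.D
  D := A.D
  wNonempty := Nonempty.map (fun d => (d, d)) A.dNonempty
  dNonempty := A.dNonempty
  predI := fun _ P => A.predI P
  funcI := fun w f => match f with
    | .inl f₀ => fun as => A.funcI f₀ as
    | .inr b => fun _ => cond b w.2 w.1
  eqI := fun _ => Eq
  eqEquiv := fun _ => eq_equivalence
  predCongr := fun _ P as bs h => by
    have hab : as = bs := funext fun i => h i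
    rw [hab]
  funcCongr := fun w f as bs h => by
    have hab : as = bs := funext fun i => h i
    rw [hab]

section Aux
variable {σ : Sig}

lemma support_empty (M : Model σ) (φ : Formula σ) : ∀ g, Support M ∅ g φ := by
  induction φ with
  | pred P ts => intro g w hw; exact absurd hw (Set.notMem_empty w)
  | eq t t' => intro g w hw; exact absurd hw (Set.notMem_empty w)
  | falsum => intro g; rfl
  | conj φ ψ ih1 ih2 => intro g; exact ⟨ih1 g, ih2 g⟩
  | idisj φ ψ ih1 ih2 => intro g; exact Or.inl (ih1 g)
  | impl φ ψ ih1 ih2 => intro g t ht _; rw [Set.subset_empty_iff] at ht; subst ht; exact ih2 g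
  | all x φ ih => intro g d; exact ih _
  | iex x φ ih => intro g; obtain ⟨d⟩ := M.dNonempty; exact ⟨d, ih _⟩

def quotSetoid (M : Model σ) (s : Set M.W) : Setoid M.D :=
  ⟨fun d d' => ∀ w ∈ s, M.eqI w d d',
   ⟨fun d w _ => (M.eqEquiv w).refl d,
    fun h w hw => (M.eqEquiv w).symm (h w hw),
    fun h1 h2 w hw => (M.eqEquiv w).trans (h1 w hw) (h2 w hw)⟩⟩

noncomputable def restrModel (M : Model σ) (s : Set M.W) (hs : s.Nonempty) : Model σ where
  W := {w // w ∈ s}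
  D := Quotient (quotSetoid M s)
  wNonempty := ⟨⟨hs.choose, hs.choose_spec⟩⟩
  dNonempty := M.dNonempty.map (Quotient.mk _)
  predI w P as := M.predI w.1 P fun i => (as i).out
  funcI w f as := Quotient.mk _ (M.funcI w.1 f fun i => (as i).out)
  eqI _ := Eq
  eqEquiv _ := eq_equivalence
  predCongr := fun w P as bs h => by
    have : as = bs := funext h
    rw [this]
  funcCongr := fun w f as bs h => by
    have : as = bs := funext h
    rw [this]

lemma restrModel_isId (M : Model σ) (s : Set M.W) (hs : s.Nonempty) :
    (restrModel M s hs).IsId := fun _ _ _ => Iff.rfl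

variable (M : Model σ) (s : Set M.W) (hs : s.Nonempty)
  (hkey : ∀ (d d' : M.D) (w : M.W), w ∈ s → M.eqI w d d' → (quotSetoid M s).r d d')

lemma out_rel (M : Model σ) (s : Set M.W) (d : M.D) :
    ∀ w ∈ s, M.eqI w (Quotient.mk (quotSetoid M s) d).out d := by
  have h := @Quotient.exact M.D (quotSetoid M s) _ d (Quotient.out_eq _)
  exact h

include hkey

lemma term_restr (t : Term σ) : ∀ (w : M.W) (hw : w ∈ s) (g : ℕ → M.D),
    Term.val (restrModel M s hs) ⟨w, hw⟩ (fun n => Quotient.mk (quotSetoid M s) (g n)) t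
      = Quotient.mk (quotSetoid M s) (Term.val M w g t) := by
  induction t with
  | var n => intro w hw g; rfl
  | func f ts ih =>
    intro w hw g
    show Quotient.mk (quotSetoid M s)
        (M.funcI w f fun i =>
          (Term.val (restrModel M s hs) ⟨w, hw⟩ (fun n => Quotient.mk (quotSetoid M s) (g n)) (ts i)).out)
      = Quotient.mk (quotSetoid M s) (M.funcI w f fun i => Term.val M w g (ts i))
    apply Quotient.sound
    apply hkey _ _ w hw
    apply M.funcCongr w f
    intro i
    rw [ih i w hw g]
    exact out_rel M s (Term.val M w g (ts i)) w hw

omit hkey in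
lemma update_restr (g : ℕ → M.D) (x : ℕ) (d : M.D) :
    (fun n => Quotient.mk (quotSetoid M s) (Function.update g x d n))
      = Function.update (fun n => Quotient.mk (quotSetoid M s) (g n)) x
          (Quotient.mk (quotSetoid M s) d) := by
  funext n
  by_cases h : n = x
  · subst h; simp
  · simp [Function.update_of_ne h]

lemma support_restr (φ : Formula σ) : ∀ (t : Set M.W), t ⊆ s → ∀ (g : ℕ → M.D),
    Support M t g φ ↔
      Support (restrModel M s hs) {w : {w // w ∈ s} | w.1 ∈ t}
        (fun n => Quotient.mk (quotSetoid M s) (g n)) φ := by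
  induction φ with
  | pred P ts =>
    intro t ht g
    constructor
    · rintro h ⟨w, hws⟩ hw
      show M.predI w P fun i => (Term.val (restrModel M s hs) ⟨w, hws⟩ _ (ts i)).out
      refine (M.predCongr w P _ _ fun i => ?_).mpr (h w hw)
      show M.eqI w (Term.val (restrModel M s hs) ⟨w, hws⟩ (fun n => Quotient.mk (quotSetoid M s) (g n)) (ts i)).out (Term.val M w g (ts i))
      rw [term_restr M s hs hkey (ts i) w hws g]
      exact out_rel M s (Term.val M w g (ts i)) w hws
    · intro h w hw
      have hws : w ∈ s := ht hw
      have := h ⟨w, hws⟩ hw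
      refine (M.predCongr w P _ _ fun i => ?_).mp this
      show M.eqI w (Term.val (restrModel M s hs) ⟨w, hws⟩ (fun n => Quotient.mk (quotSetoid M s) (g n)) (ts i)).out (Term.val M w g (ts i))
      rw [term_restr M s hs hkey (ts i) w hws g]
      exact out_rel M s (Term.val M w g (ts i)) w hws
  | eq t1 t2 =>
    intro t ht g
    constructor
    · rintro h ⟨w, hws⟩ hw
      show Term.val (restrModel M s hs) ⟨w, hws⟩ _ t1 = Term.val (restrModel M s hs) ⟨w, hws⟩ _ t2
      rw [term_restr M s hs hkey t1 w hws g, term_restr M s hs hkey t2 w hws g]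
      exact Quotient.sound (hkey _ _ w (ht hw) (h w hw))
    · intro h w hw
      have hws : w ∈ s := ht hw
      have := h ⟨w, hws⟩ hw
      rw [show Term.val (restrModel M s hs) ⟨w, hws⟩ (fun n => Quotient.mk (quotSetoid M s) (g n)) t1 = _ from term_restr M s hs hkey t1 w hws g,
        show Term.val (restrModel M s hs) ⟨w, hws⟩ (fun n => Quotient.mk (quotSetoid M s) (g n)) t2 = _ from term_restr M s hs hkey t2 w hws g] at this
      exact Quotient.exact this w hws
  | falsum =>
    intro t ht g
    constructor
    · rintro rfl
      show ({w' : {w // w ∈ s} | w'.1 ∈ (∅ : Set M.W)} : Set _) = ∅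
      ext w; simp
    · intro h
      have h' : ({w' : {w // w ∈ s} | w'.1 ∈ t} : Set _) = ∅ := h
      show t = ∅
      rw [Set.eq_empty_iff_forall_notMem]
      intro w hw
      have hmem : (⟨w, ht hw⟩ : {w // w ∈ s}) ∈ ({w' : {w // w ∈ s} | w'.1 ∈ t} : Set _) := hw
      rw [h'] at hmem
      exact hmem
  | conj φ ψ ihφ ihψ =>
    intro t ht g
    exact and_congr (ihφ t ht g) (ihψ t ht g)
  | idisj φ ψ ihφ ihψ =>
    intro t ht g
    exact or_congr (ihφ t ht g) (ihψ t ht g)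
  | impl φ ψ ihφ ihψ =>
    intro t ht g
    constructor
    · intro h u hu hφu
      have hset : {w' : {w // w ∈ s} | w'.1 ∈ Subtype.val '' u} = u := by
        ext w'
        exact Subtype.val_injective.mem_set_image
      have ht₂t : Subtype.val '' u ⊆ t := by
        rintro _ ⟨w', hw', rfl⟩; exact hu hw'
      have := (ihψ _ (ht₂t.trans ht) g).mp
        (h (Subtype.val '' u) ht₂t ((ihφ _ (ht₂t.trans ht) g).mpr ((congrArg (fun T => Support (restrModel M s hs) T (fun n => Quotient.mk (quotSetoid M s) (g n)) φ) hset).mpr hφu)))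
      exact (congrArg (fun T => Support (restrModel M s hs) T (fun n => Quotient.mk (quotSetoid M s) (g n)) ψ) hset).mp this
    · intro h t₂ ht₂ hφt
      have := h {w' : {w // w ∈ s} | w'.1 ∈ t₂} (fun w' hw' => ht₂ hw')
        ((ihφ t₂ (ht₂.trans ht) g).mp hφt)
      exact (ihψ t₂ (ht₂.trans ht) g).mpr this
  | all x φ ih =>
    intro t ht g
    constructor
    · intro h q
      induction q using Quotient.inductionOn with
      | h d =>
        refine (congrArg (fun g' => Support (restrModel M s hs) {w : {w // w ∈ s} | w.1 ∈ t} g' φ) (update_restr M s g x d)).mp ?_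
        exact (ih t ht _).mp (h d)
    · intro h d
      have := h (Quotient.mk (quotSetoid M s) d)
      replace this := (congrArg (fun g' => Support (restrModel M s hs) {w : {w // w ∈ s} | w.1 ∈ t} g' φ) (update_restr M s g x d)).mpr this
      exact (ih t ht _).mpr this
  | iex x φ ih =>
    intro t ht g
    constructor
    · rintro ⟨d, hd⟩
      refine ⟨Quotient.mk (quotSetoid M s) d, ?_⟩
      refine (congrArg (fun g' => Support (restrModel M s hs) {w : {w // w ∈ s} | w.1 ∈ t} g' φ) (update_restr M s g x d)).mp ?_
      exact (ih t ht _).mp hd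
    · rintro ⟨q, hq⟩
      obtain ⟨d, rfl⟩ := Quotient.exists_rep q
      refine ⟨d, ?_⟩
      replace hq := (congrArg (fun g' => Support (restrModel M s hs) {w : {w // w ∈ s} | w.1 ∈ t} g' φ) (update_restr M s g x d)).mpr hq
      exact (ih t ht _).mpr hq

end Aux

section Main
variable {σ : Sig}

lemma key_of_rho (M : Model σ) (s : Set M.W) (g : ℕ → M.D) (hrho : Support M s g rho) :
    ∀ (d d' : M.D) (w : M.W), w ∈ s → M.eqI w d d' → (quotSetoid M s).r d d' := by
  intro d d' w hw hdd'
  simp only [rho, Support, Formula.qm, Formula.neg, Term.val] at hrho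
  rcases hrho d d' with hall | hneg
  · intro w' hw'
    have := hall w' hw'
    simpa using this
  · exfalso
    have h1 := hneg {w} (Set.singleton_subset_iff.mpr hw) ?_
    · exact (Set.singleton_ne_empty w) h1
    · intro w' hw'
      rw [Set.mem_singleton_iff] at hw'
      subst hw'
      simpa using hdd'

lemma rho_id (M : Model σ) (hId : M.IsId) (s : Set M.W) (g : ℕ → M.D) :
    Support M s g rho := by
  simp only [rho, Support, Formula.qm, Formula.neg, Term.val]
  intro d d'
  by_cases h : d = d'
  · left
    intro w hw
    subst h
    simpa using (M.eqEquiv w).refl d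
  · right
    intro t htsub hteq
    rw [Set.eq_empty_iff_forall_notMem]
    intro w hw
    have := hteq w hw
    simp only [Function.update] at this
    exact h ((hId w d d').mp (by simpa using this))


/-- Id-entailment reduces to general entailment with the rigidity premise
∀x∀y?(x=y). -/
theorem entailsId_iff_entails_with_rigidity (σ : Sig) (Φ : Set (Formula σ)) (ψ : Formula σ) :
    EntailsId Φ ψ ↔ Entails (Φ ∪ {rho}) ψ := by
  constructor
  · intro hid M s g hsupp
    have hrho := hsupp rho (Or.inr rfl)
    rcases s.eq_empty_or_nonempty with rfl | hs
    · exact support_empty M ψ g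
    · have hkey := key_of_rho M s g hrho
      refine (support_restr M s hs hkey ψ s (subset_refl s) g).mpr ?_
      apply hid (restrModel M s hs) (restrModel_isId M s hs)
      intro φ hφ
      exact (support_restr M s hs hkey φ s (subset_refl s) g).mp (hsupp φ (Or.inl hφ))
  · intro hent M hId s g hsupp
    apply hent M s g
    intro φ hφ
    rcases hφ with hφ | hφ
    · exact hsupp φ hφ
    · rw [Set.mem_singleton_iff] at hφ
      subst hφ
      exact rho_id M hId s g


end Main

end InqBQ
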